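/- For the map T_{e,23,e}, the Gauss–Kuzmin probability of digit 0 equals 1/2; that is, ∫_{1/2}^{1} ∫_{1-x}^{x} 6/(π² x (1-y)) dy dx = 1/2. -/

import Mathlib

open MeasureTheory Set Real

/-- `log` is integrable on `Ioo 0 1`. -/
lemma neg_log_integrableOn : IntegrableOn (fun u : ℝ => -Real.log u) (Ioo (0:ℝ) 1) := by
  have hg : IntegrableOn (fun u : ℝ => 2 * u ^ (-1/2 : ℝ)) (Ioo (0:ℝ) 1) := by
    have := (intervalIntegral.intervalIntegrable_rpow' (a := 0) (b := 1)
      (r := (-1/2 : ℝ)) (by norm_num)).const_mul 2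
    rw [intervalIntegrable_iff_integrableOn_Ioo_of_le (by norm_num)] at this
    exact this
  refine Integrable.mono hg ((Real.measurable_log.neg).aestronglyMeasurable) ?_
  filter_upwards [ae_restrict_mem measurableSet_Ioo] with u hu
  have hu0 : 0 < u := hu.1
  have hu1 : u < 1 := hu.2
  have h1 : ‖-Real.log u‖ = -Real.log u := by
    rw [Real.norm_eq_abs, abs_of_nonneg]
    simpa using Real.log_nonpos hu0.le hu1.le
  have h2 : -Real.log u ≤ 2 * u ^ (-1/2 : ℝ) := by
    have h3 : Real.log (u ^ (-1/2 : ℝ)) ≤ u ^ (-1/2 : ℝ) - 1 :=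
      Real.log_le_sub_one_of_pos (Real.rpow_pos_of_pos hu0 _)
    have h4 : Real.log (u ^ (-1/2 : ℝ)) = (-1/2) * Real.log u := Real.log_rpow hu0 _
    nlinarith [Real.rpow_pos_of_pos hu0 (-1/2 : ℝ)]
  have h5 : 0 ≤ 2 * u ^ (-1/2 : ℝ) := by positivity
  rw [h1]
  calc -Real.log u ≤ 2 * u ^ (-1/2 : ℝ) := h2
    _ ≤ ‖2 * u ^ (-1/2 : ℝ)‖ := le_abs_self _

lemma pow_neg_log_integrableOn (m : ℕ) :
    IntegrableOn (fun u : ℝ => u ^ m * (-Real.log u)) (Ioo (0:ℝ) 1) := by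
  refine Integrable.mono neg_log_integrableOn
    (((continuous_pow m).measurable.mul Real.measurable_log.neg)).aestronglyMeasurable ?_
  filter_upwards [ae_restrict_mem measurableSet_Ioo] with u hu
  have hu0 : 0 < u := hu.1
  have hu1 : u < 1 := hu.2
  have hl : 0 ≤ -Real.log u := by simpa using Real.log_nonpos hu0.le hu1.le
  have hp : 0 ≤ u ^ m := by positivity
  have hp1 : u ^ m ≤ 1 := pow_le_one₀ hu0.le hu1.le
  rw [Real.norm_eq_abs, Real.norm_eq_abs, abs_of_nonneg (by positivity),
    abs_of_nonneg hl]
  nlinarith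

/-- `∫_0^1 u^m (-log u) du = 1/(m+1)^2`. -/
lemma integral_pow_neg_log (m : ℕ) :
    ∫ u in Ioo (0:ℝ) 1, u ^ m * (-Real.log u) = 1 / (m + 1 : ℝ) ^ 2 := by
  have hle : (0:ℝ) ≤ 1 := by norm_num
  set G : ℝ → ℝ := fun u => u ^ (m + 1) / (m + 1 : ℝ) ^ 2 - u ^ m * (u * Real.log u) / (m + 1 : ℝ)
    with hG
  have hm1 : ((m : ℝ) + 1) ≠ 0 := by positivity
  have hcont : ContinuousOn G (Icc 0 1) := by
    apply Continuous.continuousOn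
    exact ((continuous_pow _).div_const _).sub
      (((continuous_pow m).mul Real.continuous_mul_log).div_const _)
  have hderiv : ∀ u ∈ Ioo (0:ℝ) 1, HasDerivAt G (u ^ m * (-Real.log u)) u := by
    intro u hu
    have hu0 : u ≠ 0 := ne_of_gt hu.1
    have h1 : HasDerivAt (fun u : ℝ => u ^ (m + 1) / (m + 1 : ℝ) ^ 2)
        (u ^ m / ((m : ℝ) + 1)) u := by
      have := (hasDerivAt_pow (m + 1) u).div_const ((m + 1 : ℝ) ^ 2)
      refine this.congr_deriv ?_
      push_cast
      field_simp
    have h2 : HasDerivAt (fun u : ℝ => u ^ m * (u * Real.log u))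
        (((m:ℝ) + 1) * (u ^ m * Real.log u) + u ^ m) u := by
      have hlog : HasDerivAt Real.log u⁻¹ u := Real.hasDerivAt_log hu0
      have hml : HasDerivAt (fun u : ℝ => u * Real.log u) (Real.log u + 1)
          u := by
        have := (hasDerivAt_id u).mul hlog
        refine this.congr_deriv ?_
        field_simp
        simp only [id]; ring
      have := (hasDerivAt_pow m u).mul hml
      refine this.congr_deriv ?_
      cases m with
      | zero => norm_num
      | succ k =>
        have hk : (k + 1) - 1 = k := rfl
        rw [hk]
        push_cast
        ring
    have := h1.sub (h2.div_const ((m : ℝ) + 1))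
    refine this.congr_deriv ?_
    field_simp
    ring
  have hint : IntegrableOn (fun u : ℝ => u ^ m * (-Real.log u)) (Ioc (0:ℝ) 1) := by
    have hres : volume.restrict (Ioo (0:ℝ) 1) = volume.restrict (Ioc (0:ℝ) 1) :=
      Measure.restrict_congr_set Ioo_ae_eq_Ioc
    have h := pow_neg_log_integrableOn m
    rwa [IntegrableOn, hres] at h
  have key := intervalIntegral.integral_eq_sub_of_hasDeriv_right_of_le hle hcont
    (fun u hu => (hderiv u hu).hasDerivWithinAt)
    ((intervalIntegrable_iff_integrableOn_Ioc_of_le hle).mpr hint)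
  rw [intervalIntegral.integral_of_le hle, integral_Ioc_eq_integral_Ioo] at key
  rw [key, hG]
  norm_num

/-- The alternating Basel sum: `∑ (1/(2j+1)² − 1/(2j+2)²) = π²/12`. -/
lemma hasSum_alt :
    HasSum (fun j : ℕ => 1 / (2 * (j:ℝ) + 1) ^ 2 - 1 / (2 * (j:ℝ) + 2) ^ 2)
      (Real.pi ^ 2 / 12) := by
  have hzeta : HasSum (fun n : ℕ => (1 : ℝ) / (n : ℝ) ^ 2) (Real.pi ^ 2 / 6) := hasSum_zeta_two
  have hg : HasSum (fun n : ℕ => (1 : ℝ) / ((n : ℝ) + 1) ^ 2) (Real.pi ^ 2 / 6) := by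
    have h0 : HasSum (fun n : ℕ => (1 : ℝ) / ((n + 1 : ℕ) : ℝ) ^ 2)
        (Real.pi ^ 2 / 6 - ∑ i ∈ Finset.range 1, (1 : ℝ) / (i : ℝ) ^ 2) :=
      (hasSum_nat_add_iff' (f := fun n : ℕ => (1 : ℝ) / (n : ℝ) ^ 2) 1).mpr hzeta
    simp only [Finset.range_one, Finset.sum_singleton, Nat.cast_zero] at h0
    norm_num at h0
    convert h0 using 2 with n
    ring_nf
  have hodd : HasSum (fun j : ℕ => (1 : ℝ) / (2 * (j:ℝ) + 2) ^ 2) (Real.pi ^ 2 / 24) := by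
    have := hg.mul_left (1/4 : ℝ)
    have heq : (fun j : ℕ => (1/4 : ℝ) * (1 / ((j:ℝ) + 1) ^ 2))
        = fun j : ℕ => (1 : ℝ) / (2 * (j:ℝ) + 2) ^ 2 := by
      funext j
      have : (2 * (j:ℝ) + 2) ^ 2 = 4 * ((j:ℝ) + 1) ^ 2 := by ring
      rw [this]
      have h4 : ((j:ℝ) + 1) ^ 2 ≠ 0 := by positivity
      field_simp
    rw [heq] at this
    rw [show Real.pi ^ 2 / 24 = 1 / 4 * (Real.pi ^ 2 / 6) by ring]; exact this
  have heven_sum : Summable (fun j : ℕ => (1 : ℝ) / (2 * (j:ℝ) + 1) ^ 2) := by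
    refine Summable.of_nonneg_of_le (fun j => by positivity) (fun j => ?_) hg.summable
    apply one_div_le_one_div_of_le (by positivity)
    nlinarith [Nat.cast_nonneg (α := ℝ) j]
  have heven : HasSum (fun j : ℕ => (1 : ℝ) / (2 * (j:ℝ) + 1) ^ 2)
      (Real.pi ^ 2 / 6 - Real.pi ^ 2 / 24) := by
    have he := heven_sum.hasSum
    have hcomb := HasSum.even_add_odd (f := fun n : ℕ => (1 : ℝ) / ((n : ℝ) + 1) ^ 2)
      (by convert he using 1; funext j; push_cast; ring_nf)
      (by convert hodd using 1; funext j; push_cast; ring_nf)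
    have := hg.unique hcomb
    have h' : (∑' (b : ℕ), (1 : ℝ) / (2 * (b:ℝ) + 1) ^ 2) = Real.pi ^ 2 / 6 - Real.pi ^ 2 / 24 := by
      linarith
    rwa [h'] at he
  have := heven.sub hodd
  rw [show Real.pi ^ 2 / 12 = Real.pi ^ 2 / 6 - Real.pi ^ 2 / 24 - Real.pi ^ 2 / 24 by ring]; exact this

lemma tsum_geom_fact {u : ℝ} (hu0 : 0 < u) (hu1 : u < 1) :
    ∑' j : ℕ, u ^ (2 * j) * ((1 - u) * (-Real.log u)) = -Real.log u / (1 + u) := by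
  have h1 : ∀ j : ℕ, u ^ (2 * j) = (u ^ 2) ^ j := fun j => (pow_mul u 2 j).symm ▸ rfl
  have hgeo : ∑' j : ℕ, (u ^ 2) ^ j = (1 - u ^ 2)⁻¹ :=
    tsum_geometric_of_lt_one (by positivity) (by nlinarith)
  calc ∑' j : ℕ, u ^ (2 * j) * ((1 - u) * (-Real.log u))
      = (∑' j : ℕ, (u ^ 2) ^ j) * ((1 - u) * (-Real.log u)) := by
        rw [← tsum_mul_right]
        congr 1
        funext j
        rw [pow_mul]
    _ = -Real.log u / (1 + u) := by
        rw [hgeo]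
        have h2 : (1 : ℝ) - u ^ 2 = (1 - u) * (1 + u) := by ring
        have h3 : (1 : ℝ) - u ≠ 0 := by linarith
        have h4 : (1 : ℝ) + u ≠ 0 := by linarith
        field_simp [h2]
        ring

/-- `∫_0^1 (−log u)/(1+u) du = π²/12`. -/
lemma integral_neg_log_div : ∫ u in Ioo (0:ℝ) 1, -Real.log u / (1 + u) = Real.pi ^ 2 / 12 := by
  set F : ℕ → ℝ → ℝ := fun j u => u ^ (2 * j) * ((1 - u) * (-Real.log u)) with hF
  have hFint : ∀ j : ℕ, Integrable (F j) (volume.restrict (Ioo (0:ℝ) 1)) := by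
    intro j
    have h1 := pow_neg_log_integrableOn (2 * j)
    have h2 := pow_neg_log_integrableOn (2 * j + 1)
    have := h1.sub h2
    refine this.congr ?_
    filter_upwards [ae_restrict_mem measurableSet_Ioo] with u hu
    simp only [hF, Pi.sub_apply]
    ring
  have hFval : ∀ j : ℕ, ∫ u in Ioo (0:ℝ) 1, F j u
      = 1 / (2 * (j:ℝ) + 1) ^ 2 - 1 / (2 * (j:ℝ) + 2) ^ 2 := by
    intro j
    have h1 := integral_pow_neg_log (2 * j)
    have h2 := integral_pow_neg_log (2 * j + 1)
    have heq : ∫ u in Ioo (0:ℝ) 1, F j u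
        = ∫ u in Ioo (0:ℝ) 1,
            (u ^ (2*j) * (-Real.log u) - u ^ (2*j+1) * (-Real.log u)) := by
      refine setIntegral_congr_fun measurableSet_Ioo (fun u hu => ?_)
      simp only [hF]
      ring
    rw [heq, integral_sub (pow_neg_log_integrableOn (2*j)) (pow_neg_log_integrableOn (2*j+1)),
      h1, h2]
    push_cast
    ring_nf
  have hFnonneg : ∀ j : ℕ, ∀ u ∈ Ioo (0:ℝ) 1, 0 ≤ F j u := by
    intro j u hu
    have hl : 0 ≤ -Real.log u := by simpa using Real.log_nonpos hu.1.le hu.2.le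
    have h1u : (0:ℝ) ≤ 1 - u := by linarith [hu.2]
    exact mul_nonneg (pow_nonneg hu.1.le _) (mul_nonneg h1u hl)
  have hnorm : ∀ j : ℕ, ∫ u in Ioo (0:ℝ) 1, ‖F j u‖
      = 1 / (2 * (j:ℝ) + 1) ^ 2 - 1 / (2 * (j:ℝ) + 2) ^ 2 := by
    intro j
    rw [← hFval j]
    refine setIntegral_congr_fun measurableSet_Ioo (fun u hu => ?_)
    rw [Real.norm_eq_abs, abs_of_nonneg (hFnonneg j u hu)]
  have hsum : Summable fun j : ℕ => ∫ u in Ioo (0:ℝ) 1, ‖F j u‖ := by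
    have : (fun j : ℕ => ∫ u in Ioo (0:ℝ) 1, ‖F j u‖)
        = fun j : ℕ => 1 / (2 * (j:ℝ) + 1) ^ 2 - 1 / (2 * (j:ℝ) + 2) ^ 2 := funext hnorm
    rw [this]
    exact hasSum_alt.summable
  have key := integral_tsum_of_summable_integral_norm hFint hsum
  have hl : ∫ u in Ioo (0:ℝ) 1, -Real.log u / (1 + u)
      = ∫ u in Ioo (0:ℝ) 1, ∑' j, F j u := by
    refine setIntegral_congr_fun measurableSet_Ioo (fun u hu => ?_)
    exact (tsum_geom_fact hu.1 hu.2).symm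
  rw [hl, ← key]
  have : (fun j : ℕ => ∫ u in Ioo (0:ℝ) 1, F j u)
      = fun j : ℕ => 1 / (2 * (j:ℝ) + 1) ^ 2 - 1 / (2 * (j:ℝ) + 2) ^ 2 := funext hFval
  rw [this]
  exact hasSum_alt.tsum_eq

/-- Change of variables `x = 1/(1+u)`. -/
lemma subst_lemma :
    ∫ x in Ioo (1/2:ℝ) 1, (Real.log x - Real.log (1 - x)) / x
      = ∫ u in Ioo (0:ℝ) 1, -Real.log u / (1 + u) := by
  have himg : (fun u : ℝ => (1 + u)⁻¹) '' Ioo (0:ℝ) 1 = Ioo (1/2:ℝ) 1 := by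
    ext x
    constructor
    · rintro ⟨u, hu, rfl⟩
      constructor
      · rw [lt_inv_comm₀ (by norm_num) (by linarith [hu.1])]
        norm_num
        linarith [hu.2]
      · rw [inv_lt_one_iff₀]
        right
        linarith [hu.1]
    · rintro ⟨hx1, hx2⟩
      refine ⟨1/x - 1, ⟨?_, ?_⟩, ?_⟩
      · have : 1 < 1/x := by
          rw [lt_div_iff₀ (by linarith)]
          linarith
        linarith
      · have : 1/x < 2 := by
          rw [div_lt_iff₀ (by linarith)]
          linarith
        linarith
      · field_simp; ring
  have hderiv : ∀ u ∈ Ioo (0:ℝ) 1,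
      HasDerivWithinAt (fun u : ℝ => (1 + u)⁻¹) (-1 / (1 + u) ^ 2) (Ioo (0:ℝ) 1) u := by
    intro u hu
    have h1 : (1 : ℝ) + u ≠ 0 := by linarith [hu.1]
    have := ((hasDerivAt_id u).const_add 1).inv h1
    exact this.hasDerivWithinAt.congr_deriv (by simp)
  have hinj : Set.InjOn (fun u : ℝ => (1 + u)⁻¹) (Ioo (0:ℝ) 1) := by
    intro a ha b hb hab
    have h1 : (1 : ℝ) + a ≠ 0 := by linarith [ha.1]
    have h2 : (1 : ℝ) + b ≠ 0 := by linarith [hb.1]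
    field_simp at hab
    linarith
  have key := integral_image_eq_integral_abs_deriv_smul measurableSet_Ioo hderiv hinj
    (fun x => (Real.log x - Real.log (1 - x)) / x)
  rw [himg] at key
  rw [key]
  refine setIntegral_congr_fun measurableSet_Ioo (fun u hu => ?_)
  have hu0 : 0 < u := hu.1
  have hu1 : u < 1 := hu.2
  have h1 : (0:ℝ) < 1 + u := by linarith
  have h1' : (1:ℝ) + u ≠ 0 := ne_of_gt h1
  have hlog1 : Real.log ((1 + u)⁻¹) = -Real.log (1 + u) := Real.log_inv _
  have h2 : (1 : ℝ) - (1 + u)⁻¹ = u / (1 + u) := by field_simp; ring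
  have hlog2 : Real.log (1 - (1 + u)⁻¹) = Real.log u - Real.log (1 + u) := by
    rw [h2, Real.log_div (ne_of_gt hu0) h1']
  simp only [smul_eq_mul]
  have habs : |(-1 / (1 + u) ^ 2)| = 1 / (1 + u) ^ 2 := by
    rw [abs_div, abs_neg, abs_one, abs_of_nonneg (by positivity : (0:ℝ) ≤ (1 + u) ^ 2)]
  rw [hlog1, hlog2, habs]
  field_simp
  ring

/-- Inner integral evaluation. -/
lemma inner_integral {x : ℝ} (hx1 : 1/2 < x) (hx2 : x < 1) :
    (∫ y in (1 - x)..x, 6 / (Real.pi ^ 2 * x * (1 - y)))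
      = 6 / (Real.pi ^ 2 * x) * (Real.log x - Real.log (1 - x)) := by
  have hpi : Real.pi ≠ 0 := Real.pi_ne_zero
  have hx0 : 0 < x := by linarith
  have hle : 1 - x ≤ x := by linarith
  have hF : ∀ y ∈ Set.uIcc (1 - x) x,
      HasDerivAt (fun y : ℝ => -(6 / (Real.pi ^ 2 * x)) * Real.log (1 - y))
        (6 / (Real.pi ^ 2 * x * (1 - y))) y := by
    intro y hy
    rw [Set.uIcc_of_le hle] at hy
    have hy2 : y ≤ x := hy.2
    have h1y : (0:ℝ) < 1 - y := by linarith
    have hlog : HasDerivAt (fun y : ℝ => Real.log (1 - y)) (-(1 - y)⁻¹) y := by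
      have h := (Real.hasDerivAt_log (ne_of_gt h1y)).comp y
        (((hasDerivAt_id y).neg).const_add 1)
      exact h.congr_deriv (by simp)
    have := hlog.const_mul (-(6 / (Real.pi ^ 2 * x)))
    refine this.congr_deriv ?_
    field_simp
  have hcont : ContinuousOn (fun y : ℝ => 6 / (Real.pi ^ 2 * x * (1 - y)))
      (Set.uIcc (1 - x) x) := by
    apply ContinuousOn.div continuousOn_const
    · exact (continuousOn_const.mul (continuousOn_const.sub continuousOn_id))
    · intro y hy
      rw [Set.uIcc_of_le hle] at hy
      have : (0:ℝ) < 1 - y := by linarith [hy.2]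
      have hp2 : (0:ℝ) < Real.pi ^ 2 := by positivity
      positivity
  rw [intervalIntegral.integral_eq_sub_of_hasDerivAt hF
    (hcont.intervalIntegrable)]
  have hxx : (1 : ℝ) - (1 - x) = x := by ring
  rw [hxx]
  ring

theorem stmt14 :
    (∫ x in (1 / 2 : ℝ)..1, ∫ y in (1 - x)..x, 6 / (Real.pi ^ 2 * x * (1 - y))) = 1 / 2 := by
  have hpi : Real.pi ≠ 0 := Real.pi_ne_zero
  rw [intervalIntegral.integral_of_le (by norm_num : (1/2:ℝ) ≤ 1),
    integral_Ioc_eq_integral_Ioo]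
  have step1 : ∫ x in Ioo (1/2:ℝ) 1, (∫ y in (1 - x)..x, 6 / (Real.pi ^ 2 * x * (1 - y)))
      = ∫ x in Ioo (1/2:ℝ) 1, 6 / Real.pi ^ 2 * ((Real.log x - Real.log (1 - x)) / x) := by
    refine setIntegral_congr_fun measurableSet_Ioo (fun x hx => ?_)
    rw [inner_integral hx.1 hx.2]
    have hx0 : x ≠ 0 := by intro h; rw [h] at hx; exact absurd hx.1 (by norm_num)
    field_simp
  rw [step1, integral_const_mul, subst_lemma, integral_neg_log_div]
  field_simp
  ring
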